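/- With the level-set discretization (coefficients α_{l} = (1+ε)^{l} r_min), the optimal value of the linear program minimizing Σ_{(l_1,...,l_k)} Σ_{j=1}^k α_{l_j} x^j_{(l_1,...,l_k)} subject to Σ_j x^j_{(l_1,...,l_k)} = n_{(l_1,...,l_k)} and L ≤ Σ x^j ≤ U over nonnegative reals is at most (1+ε) times the minimum balanced k-median cost achievable with the given centers c_1,...,c_k. -/
import Mathlib

attribute [local instance] Classical.propDecidable

/-- Point `p` lies in the level-set region indexed by the tuple `t`. -/
def inRegion {d k L' : ℕ} (c : Fin k → EuclideanSpace ℝ (Fin d)) (ε rmin : ℝ)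
    (p : EuclideanSpace ℝ (Fin d)) (t : Fin k → Fin (L' + 1)) : Prop :=
  ∀ j, dist p (c j) ≤ (1 + ε) ^ (t j : ℕ) * rmin ∧
    ((t j : ℕ) = 0 ∨ (1 + ε) ^ ((t j : ℕ) - 1) * rmin < dist p (c j))

/-- `Q` is a partition of `P` into `k` clusters whose sizes all lie in `[L, U]`. -/
def IsBalancedPartition {α : Type*} (P : Finset α) (k L U : ℕ)
    (Q : Fin k → Finset α) : Prop :=
  (∀ j, Q j ⊆ P) ∧ (∀ i j, i ≠ j → Disjoint (Q i) (Q j)) ∧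
  (∀ p ∈ P, ∃ j, p ∈ Q j) ∧ (∀ j, L ≤ (Q j).card ∧ (Q j).card ≤ U)

/-- The least level `l ≤ L'` such that `dist p cj ≤ (1+ε)^l * rmin`, as a `Fin (L'+1)`. -/
noncomputable def levT {d : ℕ} (L' : ℕ) (cj : EuclideanSpace ℝ (Fin d)) (ε rmin : ℝ)
    (p : EuclideanSpace ℝ (Fin d)) : Fin (L' + 1) :=
  if h : ∃ l, l ≤ L' ∧ dist p cj ≤ (1 + ε) ^ l * rmin then
    ⟨Nat.find h, Nat.lt_succ_of_le (Nat.find_spec h).1⟩ else 0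

theorem stmt8 {d k L' : ℕ} (hk : 0 < k) (P : Finset (EuclideanSpace ℝ (Fin d)))
    (c : Fin k → EuclideanSpace ℝ (Fin d)) (ε rmin : ℝ) (hε : 0 < ε) (hrmin : 0 < rmin)
    (hlow : ∀ p ∈ P, ∀ j, rmin ≤ dist p (c j))
    (hhigh : ∀ p ∈ P, ∀ j, dist p (c j) ≤ (1 + ε) ^ L' * rmin)
    (L U : ℕ) (hL : 0 < L)
    (n : (Fin k → Fin (L' + 1)) → ℕ)
    (hn : ∀ t, n t = (P.filter fun p => inRegion c ε rmin p t).card) :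
    ∀ Q : Fin k → Finset (EuclideanSpace ℝ (Fin d)), IsBalancedPartition P k L U Q →
      ∃ x : (Fin k → Fin (L' + 1)) → Fin k → ℝ,
        (∀ t j, 0 ≤ x t j) ∧
        (∀ t, ∑ j, x t j = (n t : ℝ)) ∧
        (∀ j : Fin k, (L : ℝ) ≤ ∑ t : Fin k → Fin (L' + 1), x t j ∧
          ∑ t : Fin k → Fin (L' + 1), x t j ≤ (U : ℝ)) ∧
        (∑ t : Fin k → Fin (L' + 1), ∑ j, (1 + ε) ^ (t j : ℕ) * rmin * x t j) ≤
          (1 + ε) * ∑ j, ∑ p ∈ Q j, dist p (c j) := by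
  intro Q hQ
  obtain ⟨hsub, hdisj, hcover, hsize⟩ := hQ
  have hone : (1 : ℝ) ≤ 1 + ε := by linarith
  set lev : EuclideanSpace ℝ (Fin d) → Fin k → Fin (L' + 1) :=
    fun p j => levT L' (c j) ε rmin p with hlev
  -- existence of a level for points of P
  have hex : ∀ p ∈ P, ∀ j, ∃ l, l ≤ L' ∧ dist p (c j) ≤ (1 + ε) ^ l * rmin := by
    intro p hp j; exact ⟨L', le_refl _, hhigh p hp j⟩
  -- each point of P is in its own region
  have hmem : ∀ p ∈ P, inRegion c ε rmin p (lev p) := by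
    intro p hp j
    have h := hex p hp j
    simp only [hlev, levT, dif_pos h]
    constructor
    · exact (Nat.find_spec h).2
    · rcases Nat.eq_zero_or_pos (Nat.find h) with h0 | h0
      · exact Or.inl h0
      · refine Or.inr ?_
        have hmin := Nat.find_min h (m := Nat.find h - 1) (Nat.sub_lt h0 one_pos)
        push_neg at hmin
        have hle : Nat.find h - 1 ≤ L' := le_trans (Nat.sub_le _ _) (Nat.find_spec h).1
        exact hmin hle
  -- uniqueness of the region
  have huniq : ∀ p ∈ P, ∀ t, inRegion c ε rmin p t → t = lev p := by
    intro p hp t ht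
    funext j
    have h := hex p hp j
    have hfind : (lev p j : ℕ) = Nat.find h := by simp [hlev, levT, dif_pos h]
    have hle1 : Nat.find h ≤ (t j : ℕ) := by
      apply Nat.find_min' h
      exact ⟨Nat.le_of_lt_succ (t j).isLt, (ht j).1⟩
    rcases lt_or_eq_of_le hle1 with hlt | heq
    · exfalso
      rcases (ht j).2 with h0 | hstrict
      · omega
      · have h1 : Nat.find h ≤ (t j : ℕ) - 1 := by omega
        have h2 : (1 + ε) ^ (Nat.find h) * rmin ≤ (1 + ε) ^ ((t j : ℕ) - 1) * rmin := by
          have := pow_le_pow_right₀ hone h1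
          nlinarith
        have h3 := (Nat.find_spec h).2
        linarith
    · exact Fin.ext (by omega)
  -- per-point cost bound
  have hbound : ∀ p ∈ P, ∀ j, (1 + ε) ^ ((lev p j : ℕ)) * rmin ≤ (1 + ε) * dist p (c j) := by
    intro p hp j
    rcases Nat.eq_zero_or_pos ((lev p j : ℕ)) with h0 | hpos
    · rw [h0]
      simp only [pow_zero, one_mul]
      nlinarith [hlow p hp j]
    · obtain ⟨m, hm⟩ : ∃ m, (lev p j : ℕ) = m + 1 :=
        ⟨(lev p j : ℕ) - 1, by omega⟩
      have hstrict : (1 + ε) ^ ((lev p j : ℕ) - 1) * rmin < dist p (c j) := by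
        rcases (hmem p hp j).2 with h | h
        · omega
        · exact h
      rw [hm] at hstrict ⊢
      simp only [Nat.add_sub_cancel] at hstrict
      rw [pow_succ]
      have hpow : (0:ℝ) < (1 + ε) ^ m := by positivity
      nlinarith
  -- the solution
  refine ⟨fun t j => (((Q j).filter fun p => lev p = t).card : ℝ), ?_, ?_, ?_, ?_⟩
  · intro t j; positivity
  · -- region counts
    intro t
    have hPbi : P = Finset.univ.biUnion Q := by
      ext p
      simp only [Finset.mem_biUnion, Finset.mem_univ, true_and]
      exact ⟨fun hp => hcover p hp, fun ⟨j, hj⟩ => hsub j hj⟩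
    have hfilter : (P.filter fun p => inRegion c ε rmin p t) =
        P.filter fun p => lev p = t := by
      apply Finset.filter_congr
      intro p hp
      constructor
      · intro h; exact (huniq p hp t h).symm
      · intro h; rw [← h]; exact hmem p hp
    rw [hn t, hfilter, hPbi, Finset.filter_biUnion, Finset.card_biUnion]
    · push_cast
      rfl
    · intro i _ j _ hij
      exact Finset.disjoint_filter_filter (hdisj i j hij)
  · -- cluster sizes
    intro j
    have hcardN : ∑ t : Fin k → Fin (L' + 1),
        ((Q j).filter fun p => lev p = t).card = (Q j).card :=
      (Finset.card_eq_sum_card_fiberwise (f := lev) (t := Finset.univ)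
        (fun p _ => Finset.mem_univ _)).symm
    have hcard : ∑ t : Fin k → Fin (L' + 1),
        ((((Q j).filter fun p => lev p = t).card : ℝ)) = ((Q j).card : ℝ) := by
      rw [← Nat.cast_sum, hcardN]
    rw [hcard]
    exact ⟨by exact_mod_cast (hsize j).1, by exact_mod_cast (hsize j).2⟩
  · -- objective bound
    rw [Finset.sum_comm]
    have key : ∀ j : Fin k, ∑ t : Fin k → Fin (L' + 1),
        (1 + ε) ^ (t j : ℕ) * rmin * (((Q j).filter fun p => lev p = t).card : ℝ) =
        ∑ p ∈ Q j, (1 + ε) ^ ((lev p j : ℕ)) * rmin := by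
      intro j
      have : ∀ t : Fin k → Fin (L' + 1),
          (1 + ε) ^ (t j : ℕ) * rmin * (((Q j).filter fun p => lev p = t).card : ℝ) =
          ∑ p ∈ (Q j).filter fun p => lev p = t, (1 + ε) ^ ((lev p j : ℕ)) * rmin := by
        intro t
        rw [Finset.sum_congr rfl (fun p hp => by
          rw [(Finset.mem_filter.mp hp).2])]
        rw [Finset.sum_const, nsmul_eq_mul]
        ring
      rw [Finset.sum_congr rfl fun t _ => this t]
      exact Finset.sum_fiberwise _ _ _
    rw [Finset.sum_congr rfl fun j _ => key j, Finset.mul_sum]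
    apply Finset.sum_le_sum
    intro j _
    rw [Finset.mul_sum]
    exact Finset.sum_le_sum fun p hp => hbound p (hsub j hp) j
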